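/- arXiv:2207.05922 — 5 statements merged into one kernel-verified Lean document; each statement's English description precedes it below -/
import Mathlib

section
/- For positive semidefinite symmetric real n×n matrices S and T, the trace of S·T is bounded below by the sum over i of λ_i(S)·λ_{n-i+1}(T), where λ_1 ≥ λ_2 ≥ ... ≥ λ_n denote the eigenvalues in decreasing order. -/
open Matrix Finset

private lemma tele_aux {n : ℕ} (f : ℕ → ℝ) (i : ℕ) (hi : i ≤ n) :
    ∑ k ∈ Finset.Ico i n, (f k - f (k+1)) = f i - f n := by
  rw [Finset.sum_Ico_eq_sub _ hi, Finset.sum_range_sub', Finset.sum_range_sub']; ring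

private lemma swap_out {M : Type*} [AddCommMonoid M] {α γ δ : Type*} [Fintype α]
    (s : Finset γ) (t : Finset δ) (f : α → γ → δ → M) :
    ∑ i, ∑ k ∈ s, ∑ l ∈ t, f i k l = ∑ k ∈ s, ∑ l ∈ t, ∑ i, f i k l := by
  rw [Finset.sum_comm]; exact Finset.sum_congr rfl fun k _ => Finset.sum_comm

private lemma swap_out2 {M : Type*} [AddCommMonoid M] {α β γ δ : Type*} [Fintype α] [Fintype β]
    (s : Finset γ) (t : Finset δ) (f : α → β → γ → δ → M) :
    ∑ i, ∑ j, ∑ k ∈ s, ∑ l ∈ t, f i j k l = ∑ k ∈ s, ∑ l ∈ t, ∑ i, ∑ j, f i j k l := by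
  calc ∑ i, ∑ j, ∑ k ∈ s, ∑ l ∈ t, f i j k l
      = ∑ i, ∑ k ∈ s, ∑ l ∈ t, ∑ j, f i j k l :=
        Finset.sum_congr rfl fun i _ => swap_out s t _
    _ = ∑ k ∈ s, ∑ l ∈ t, ∑ i, ∑ j, f i j k l := swap_out s t _

/-- The key rearrangement inequality for doubly stochastic weights. -/
private lemma key_ineq {n : ℕ} (d : Fin n → Fin n → ℝ) (hd : ∀ i j, 0 ≤ d i j)
    (hrow : ∀ i, ∑ j, d i j = 1) (hcol : ∀ j, ∑ i, d i j = 1)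
    (μ ν : Fin n → ℝ) (hμ : Antitone μ) (hν : Antitone ν)
    (hμ0 : ∀ i, 0 ≤ μ i) (hν0 : ∀ i, 0 ≤ ν i) :
    ∑ i, μ i * ν (Fin.rev i) ≤ ∑ i, ∑ j, μ i * ν j * d i j := by
  classical
  set μ' : ℕ → ℝ := fun k => if h : k < n then μ ⟨k, h⟩ else 0 with hμ'
  set ν' : ℕ → ℝ := fun k => if h : k < n then ν ⟨k, h⟩ else 0 with hν'
  set a : ℕ → ℝ := fun k => μ' k - μ' (k+1) with ha'
  set b : ℕ → ℝ := fun k => ν' k - ν' (k+1) with hb'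
  have ha : ∀ k, 0 ≤ a k := by
    intro k
    simp only [ha', hμ', sub_nonneg]
    by_cases h2 : k < n
    · by_cases h1 : k + 1 < n
      · rw [dif_pos h1, dif_pos h2]; exact hμ (by simp [Fin.le_def])
      · rw [dif_neg h1, dif_pos h2]; exact hμ0 _
    · rw [dif_neg h2, dif_neg (by omega)]
  have hb : ∀ k, 0 ≤ b k := by
    intro k
    simp only [hb', hν', sub_nonneg]
    by_cases h2 : k < n
    · by_cases h1 : k + 1 < n
      · rw [dif_pos h1, dif_pos h2]; exact hν (by simp [Fin.le_def])
      · rw [dif_neg h1, dif_pos h2]; exact hν0 _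
    · rw [dif_neg h2, dif_neg (by omega)]
  have hfil : ∀ m : ℕ, (Finset.range n).filter (fun k => m ≤ k) = Finset.Ico m n := by
    intro m; ext x; simp [and_comm]
  have hμdec : ∀ i : Fin n, μ i = ∑ k ∈ Finset.range n, if (i : ℕ) ≤ k then a k else 0 := by
    intro i
    rw [← Finset.sum_filter, hfil, tele_aux μ' _ (le_of_lt i.isLt)]
    simp [hμ', i.isLt]
  have hνdec : ∀ i : Fin n, ν i = ∑ k ∈ Finset.range n, if (i : ℕ) ≤ k then b k else 0 := by
    intro i
    rw [← Finset.sum_filter, hfil, tele_aux ν' _ (le_of_lt i.isLt)]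
    simp [hν', i.isLt]
  set C : ℕ → ℕ → ℝ := fun k l =>
    ∑ i : Fin n, if (i : ℕ) ≤ k ∧ ((Fin.rev i : Fin n) : ℕ) ≤ l then (1:ℝ) else 0 with hC
  set Sd : ℕ → ℕ → ℝ := fun k l =>
    ∑ i : Fin n, ∑ j : Fin n, if (i : ℕ) ≤ k ∧ (j : ℕ) ≤ l then d i j else 0 with hSd
  have hLHS : ∑ i, μ i * ν (Fin.rev i)
      = ∑ k ∈ Finset.range n, ∑ l ∈ Finset.range n, a k * b l * C k l := by
    have h1 : ∀ i : Fin n, μ i * ν (Fin.rev i)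
        = ∑ k ∈ Finset.range n, ∑ l ∈ Finset.range n,
            ((if (i : ℕ) ≤ k then a k else 0) *
              (if ((Fin.rev i : Fin n) : ℕ) ≤ l then b l else 0)) := by
      intro i
      rw [hμdec i, hνdec (Fin.rev i), Finset.sum_mul_sum]
    rw [Finset.sum_congr rfl (fun i _ => h1 i), swap_out]
    refine Finset.sum_congr rfl (fun k _ => Finset.sum_congr rfl (fun l _ => ?_))
    simp only [hC]
    rw [Finset.mul_sum]
    refine Finset.sum_congr rfl (fun i _ => ?_)
    by_cases h2 : (i : ℕ) ≤ k <;> by_cases h3 : ((Fin.rev i : Fin n) : ℕ) ≤ l <;>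
      simp [h2, h3, mul_assoc]
  have hRHS : ∑ i, ∑ j, μ i * ν j * d i j
      = ∑ k ∈ Finset.range n, ∑ l ∈ Finset.range n, a k * b l * Sd k l := by
    have h1 : ∀ i j : Fin n, μ i * ν j * d i j
        = ∑ k ∈ Finset.range n, ∑ l ∈ Finset.range n,
            ((if (i : ℕ) ≤ k then a k else 0) * (if (j : ℕ) ≤ l then b l else 0) * d i j) := by
      intro i j
      rw [hμdec i, hνdec j, Finset.sum_mul_sum, Finset.sum_mul]
      exact Finset.sum_congr rfl fun k _ => Finset.sum_mul _ _ _
    rw [Finset.sum_congr rfl (fun i _ => Finset.sum_congr rfl (fun j _ => h1 i j)), swap_out2]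
    refine Finset.sum_congr rfl (fun k _ => Finset.sum_congr rfl (fun l _ => ?_))
    simp only [hSd]
    rw [Finset.mul_sum]
    refine Finset.sum_congr rfl (fun i _ => ?_)
    rw [Finset.mul_sum]
    refine Finset.sum_congr rfl (fun j _ => ?_)
    by_cases h2 : (i : ℕ) ≤ k <;> by_cases h3 : (j : ℕ) ≤ l <;>
      simp [h2, h3] <;> ring
  rw [hLHS, hRHS]
  refine Finset.sum_le_sum (fun k hk => Finset.sum_le_sum (fun l hl => ?_))
  rw [Finset.mem_range] at hk hl
  refine mul_le_mul_of_nonneg_left ?_ (mul_nonneg (ha k) (hb l))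
  -- It remains to show `C k l ≤ Sd k l`.
  have hSd0 : 0 ≤ Sd k l := by
    refine Finset.sum_nonneg fun i _ => Finset.sum_nonneg fun j _ => ?_
    split_ifs
    · exact hd i j
    · exact le_refl 0
  have hcount : ∀ m : ℕ, m < n → (∑ i : Fin n, if (i : ℕ) ≤ m then (1:ℝ) else 0) = m + 1 := by
    intro m hm
    rw [Fin.sum_univ_eq_sum_range (fun i => if i ≤ m then (1:ℝ) else 0), ← Finset.sum_filter]
    rw [show (Finset.range n).filter (fun i => i ≤ m) = Finset.range (m+1) by
      ext x; simp; omega]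
    simp
  have hcount' : (∑ j : Fin n, if ¬ (j : ℕ) ≤ l then (1:ℝ) else 0) = n - (l + 1) := by
    have := hcount l hl
    have h2 : ∀ j : Fin n, (if ¬ (j : ℕ) ≤ l then (1:ℝ) else 0)
        = 1 - (if (j : ℕ) ≤ l then (1:ℝ) else 0) := by
      intro j; split_ifs <;> ring
    rw [Finset.sum_congr rfl fun j _ => h2 j, Finset.sum_sub_distrib, this]
    simp
  -- lower bound on Sd
  have hSdlow : (k + 1 : ℝ) + (l + 1) - n ≤ Sd k l := by
    have hsplit : ∀ i : Fin n, ∑ j : Fin n, (if (i : ℕ) ≤ k ∧ (j : ℕ) ≤ l then d i j else 0)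
        = (if (i : ℕ) ≤ k then (1:ℝ) else 0)
          - (if (i : ℕ) ≤ k then (∑ j : Fin n, if ¬ (j : ℕ) ≤ l then d i j else 0) else 0) := by
      intro i
      by_cases hik : (i : ℕ) ≤ k
      · simp only [hik, if_true, true_and]
        rw [eq_sub_iff_add_eq, ← Finset.sum_add_distrib, ← hrow i]
        refine Finset.sum_congr rfl fun j _ => ?_
        split_ifs <;> ring
      · simp [hik]
    have hBle : (∑ i : Fin n, if (i : ℕ) ≤ k then
          (∑ j : Fin n, if ¬ (j : ℕ) ≤ l then d i j else 0) else 0)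
        ≤ ((n : ℝ) - (l + 1)) := by
      have step1 : (∑ i : Fin n, if (i : ℕ) ≤ k then
            (∑ j : Fin n, if ¬ (j : ℕ) ≤ l then d i j else 0) else 0)
          ≤ ∑ i : Fin n, ∑ j : Fin n, if ¬ (j : ℕ) ≤ l then d i j else 0 := by
        refine Finset.sum_le_sum fun i _ => ?_
        split_ifs
        · exact le_refl _
        · refine Finset.sum_nonneg fun j _ => ?_
          by_cases h : (j : ℕ) ≤ l <;> simp [h, hd i j]
      have step2 : (∑ i : Fin n, ∑ j : Fin n, if ¬ (j : ℕ) ≤ l then d i j else 0)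
          = ((n : ℝ) - (l + 1)) := by
        rw [Finset.sum_comm, ← hcount']
        refine Finset.sum_congr rfl fun j _ => ?_
        by_cases h : (j : ℕ) ≤ l
        · simp [h]
        · simp [h, hcol j]
      exact step2 ▸ step1
    have hck := hcount k hk
    simp only [hSd]
    rw [Finset.sum_congr rfl (fun i _ => hsplit i), Finset.sum_sub_distrib, hck]
    linarith
  -- upper bound on C
  by_cases hcase : k + l + 2 ≤ n
  · have hC0 : C k l = 0 := by
      simp only [hC]
      refine Finset.sum_eq_zero fun i _ => ?_
      rw [if_neg]
      rintro ⟨h1, h2⟩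
      rw [Fin.val_rev] at h2
      omega
    rw [hC0]; exact hSd0
  · have hCle : C k l ≤ ((Finset.Icc (n - 1 - l) k).card : ℝ) := by
      simp only [hC]
      rw [Finset.sum_boole]
      have : (Finset.univ.filter
          (fun i : Fin n => (i : ℕ) ≤ k ∧ ((Fin.rev i : Fin n) : ℕ) ≤ l)).card
          ≤ (Finset.Icc (n - 1 - l) k).card := by
        refine Finset.card_le_card_of_injOn (fun i => (i : ℕ)) ?_ ?_
        · intro i hi
          simp only [Finset.coe_filter, Finset.mem_coe, Finset.mem_filter, Finset.mem_univ, true_and, Set.mem_setOf_eq] at hi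
          rw [Fin.val_rev] at hi
          simp only [Finset.coe_Icc, Finset.mem_coe, Set.mem_Icc, Finset.mem_Icc]
          omega
        · exact Fin.val_injective.injOn
      exact_mod_cast this
    have hcard : ((Finset.Icc (n - 1 - l) k).card : ℝ) = (k + 1 : ℝ) + (l + 1) - n := by
      rw [Nat.card_Icc]
      have : k + 1 - (n - 1 - l) = k + l + 2 - n := by omega
      rw [this]
      push_cast [Nat.cast_sub (by omega : n ≤ k + l + 2)]
      ring
    calc C k l ≤ ((Finset.Icc (n - 1 - l) k).card : ℝ) := hCle
      _ = (k + 1 : ℝ) + (l + 1) - n := hcard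
      _ ≤ Sd k l := hSdlow

/-- For positive semidefinite symmetric matrices `S`, `T` with eigenvalues listed in
decreasing order as `μ`, `ν` (via orthogonal diagonalizations), the trace of `S * T`
is at least `∑ i, μ i * ν (rev i)`. -/
theorem stmt1 {n : ℕ} (S T : Matrix (Fin n) (Fin n) ℝ)
    (hS : S.PosSemidef) (hT : T.PosSemidef)
    (μ ν : Fin n → ℝ) (U V : Matrix (Fin n) (Fin n) ℝ)
    (hU : Uᵀ * U = 1) (hV : Vᵀ * V = 1)
    (hμ : Antitone μ) (hν : Antitone ν)
    (hSU : S = U * Matrix.diagonal μ * Uᵀ)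
    (hTV : T = V * Matrix.diagonal ν * Vᵀ) :
    ∑ i : Fin n, μ i * ν (Fin.rev i) ≤ (S * T).trace := by
  classical
  have hUU : U * Uᵀ = 1 := mul_eq_one_comm.mp hU
  have hVV : V * Vᵀ = 1 := mul_eq_one_comm.mp hV
  set Q : Matrix (Fin n) (Fin n) ℝ := Uᵀ * V with hQ
  have hQQ : Q * Qᵀ = 1 := by
    rw [hQ, transpose_mul, transpose_transpose]
    calc Uᵀ * V * (Vᵀ * U) = Uᵀ * (V * Vᵀ) * U := by
          simp [Matrix.mul_assoc]
      _ = 1 := by rw [hVV, Matrix.mul_one, hU]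
  have hQtQ : Qᵀ * Q = 1 := mul_eq_one_comm.mp hQQ
  -- trace identity
  have htrace : (S * T).trace = ∑ i, ∑ j, μ i * ν j * (Q i j)^2 := by
    have h1 : S * T = U * (Matrix.diagonal μ * Uᵀ * V * Matrix.diagonal ν * Vᵀ) := by
      rw [hSU, hTV]; simp [Matrix.mul_assoc]
    have h2 : (Matrix.diagonal μ * Uᵀ * V * Matrix.diagonal ν * Vᵀ) * U
        = Matrix.diagonal μ * Q * Matrix.diagonal ν * Qᵀ := by
      rw [hQ, transpose_mul, transpose_transpose]; simp [Matrix.mul_assoc]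
    rw [h1, Matrix.trace_mul_comm, h2]
    simp [Matrix.trace, Matrix.mul_apply, Matrix.diag, Matrix.diagonal,
      Finset.mul_sum, Finset.sum_mul]
    refine Finset.sum_congr rfl fun i _ => Finset.sum_congr rfl fun j _ => ?_
    ring
  -- eigenvalues are nonnegative
  have hDμ : Matrix.diagonal μ = Uᵀ * S * U := by
    rw [hSU]
    have h : Uᵀ * (U * Matrix.diagonal μ * Uᵀ) * U
        = (Uᵀ * U) * Matrix.diagonal μ * (Uᵀ * U) := by simp [Matrix.mul_assoc]
    rw [h, hU, Matrix.one_mul, Matrix.mul_one]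
  have hDν : Matrix.diagonal ν = Vᵀ * T * V := by
    rw [hTV]
    have h : Vᵀ * (V * Matrix.diagonal ν * Vᵀ) * V
        = (Vᵀ * V) * Matrix.diagonal ν * (Vᵀ * V) := by simp [Matrix.mul_assoc]
    rw [h, hV, Matrix.one_mul, Matrix.mul_one]
  have hμ0 : ∀ i, 0 ≤ μ i := by
    refine Matrix.posSemidef_diagonal_iff.mp ?_
    rw [hDμ, show Uᵀ = Uᴴ from by ext i j; simp [Matrix.conjTranspose_apply]]
    exact hS.conjTranspose_mul_mul_same U
  have hν0 : ∀ i, 0 ≤ ν i := by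
    refine Matrix.posSemidef_diagonal_iff.mp ?_
    rw [hDν, show Vᵀ = Vᴴ from by ext i j; simp [Matrix.conjTranspose_apply]]
    exact hT.conjTranspose_mul_mul_same V
  rw [htrace]
  refine key_ineq (fun i j => (Q i j)^2) (fun i j => sq_nonneg _) ?_ ?_ μ ν hμ hν hμ0 hν0
  · intro i
    have := congrFun (congrFun hQQ i) i
    simp only [Matrix.mul_apply, Matrix.transpose_apply, Matrix.one_apply_eq] at this
    rw [← this]
    exact Finset.sum_congr rfl fun j _ => (sq (Q i j)).symm ▸ by ring
  · intro j
    have := congrFun (congrFun hQtQ j) j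
    simp only [Matrix.mul_apply, Matrix.transpose_apply, Matrix.one_apply_eq] at this
    rw [← this]
    exact Finset.sum_congr rfl fun i _ => by ring
end

section
/- Let P be symmetric positive definite, γ > 0, and let (F_t)_{t≥0} be a sequence of ñ×ñ real matrices such that for all t, P ⪰ F_tᵀ P F_t + γ I. Define the products G_t := F_t F_{t-1} ⋯ F_0. Then P ⪰ G_tᵀ P G_t + γ (I + ∑_{s=0}^{t-1} G_sᵀ G_s) for all t ≥ 1; consequently ∑_{s=0}^{∞} G_sᵀ G_s is bounded above in the Loewner order (by γ^{-1} P), and therefore G_tᵀ G_t → 0 as t → ∞, i.e., G_t x₀ → 0 for every x₀. -/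
open Matrix

private lemma psd_smul {n : ℕ} {M : Matrix (Fin n) (Fin n) ℝ} (hM : M.PosSemidef)
    {c : ℝ} (hc : 0 ≤ c) : (c • M).PosSemidef := by
  refine Matrix.PosSemidef.of_dotProduct_mulVec_nonneg ?_ ?_
  · show (c • M)ᴴ = c • M
    simp only [conjTranspose_smul, star_trivial, hM.1.eq]
  · intro x
    have := hM.dotProduct_mulVec_nonneg x
    simp only [smul_mulVec, dotProduct_smul, smul_eq_mul]
    exact mul_nonneg hc this

/-- If `P ≻ 0` and `P ⪰ F_tᵀ P F_t + γ I` for all `t` (with `γ > 0`), then the products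
`G_t = F_t ⋯ F_0` satisfy `P ⪰ G_tᵀ P G_t + γ (I + ∑_{s<t} G_sᵀ G_s)` for `t ≥ 1`;
hence the partial sums `∑_{s<t} G_sᵀ G_s` are bounded by `γ⁻¹ P` in the Loewner order,
`G_tᵀ G_t → 0`, and `G_t x₀ → 0` for every `x₀`. -/
theorem stmt12 {n : ℕ} (P : Matrix (Fin n) (Fin n) ℝ) (hP : P.PosDef)
    (γ : ℝ) (hγ : 0 < γ) (F G : ℕ → Matrix (Fin n) (Fin n) ℝ)
    (hLyap : ∀ t, (P - (F t)ᵀ * P * F t - γ • (1 : Matrix (Fin n) (Fin n) ℝ)).PosSemidef)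
    (hG0 : G 0 = F 0) (hGs : ∀ t, G (t + 1) = F (t + 1) * G t) :
    (∀ t : ℕ, 1 ≤ t →
      (P - (G t)ᵀ * P * G t
        - γ • ((1 : Matrix (Fin n) (Fin n) ℝ)
          + ∑ s ∈ Finset.range t, (G s)ᵀ * G s)).PosSemidef) ∧
    (∀ t : ℕ, (γ⁻¹ • P - ∑ s ∈ Finset.range t, (G s)ᵀ * G s).PosSemidef) ∧
    Filter.Tendsto (fun t => (G t)ᵀ * G t) Filter.atTop (nhds 0) ∧
    ∀ x₀ : Fin n → ℝ, Filter.Tendsto (fun t => G t *ᵥ x₀) Filter.atTop (nhds 0) := by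
  -- key inductive claim (for all t, with the convention that at t=0 we get the Lyapunov ineq)
  have key : ∀ t : ℕ, (P - (G t)ᵀ * P * G t
      - γ • ((1 : Matrix (Fin n) (Fin n) ℝ)
        + ∑ s ∈ Finset.range t, (G s)ᵀ * G s)).PosSemidef := by
    intro t
    induction t with
    | zero =>
      have h0 := hLyap 0
      have : P - (G 0)ᵀ * P * G 0
          - γ • ((1 : Matrix (Fin n) (Fin n) ℝ) + ∑ s ∈ Finset.range 0, (G s)ᵀ * G s)
          = P - (F 0)ᵀ * P * F 0 - γ • (1 : Matrix (Fin n) (Fin n) ℝ) := by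
        simp [hG0]
      rw [this]; exact h0
    | succ t ih =>
      have h1 := (hLyap (t + 1)).conjTranspose_mul_mul_same (G t)
      have heq : P - (G (t+1))ᵀ * P * G (t+1)
          - γ • ((1 : Matrix (Fin n) (Fin n) ℝ) + ∑ s ∈ Finset.range (t+1), (G s)ᵀ * G s)
          = (G t)ᴴ * (P - (F (t+1))ᵀ * P * F (t+1)
              - γ • (1 : Matrix (Fin n) (Fin n) ℝ)) * G t
            + (P - (G t)ᵀ * P * G t
              - γ • ((1 : Matrix (Fin n) (Fin n) ℝ) + ∑ s ∈ Finset.range t, (G s)ᵀ * G s)) := by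
        have hconj : (G t)ᴴ = (G t)ᵀ := rfl
        rw [Finset.sum_range_succ, hGs t, hconj]
        simp only [transpose_mul, Matrix.mul_sub, Matrix.sub_mul, Matrix.mul_smul,
          Matrix.smul_mul, Matrix.mul_one, Matrix.one_mul, smul_add]
        rw [← mul_assoc, ← mul_assoc, ← mul_assoc]
        abel
      rw [heq]
      exact h1.add ih
  have bound : ∀ t : ℕ, (γ⁻¹ • P - ∑ s ∈ Finset.range t, (G s)ᵀ * G s).PosSemidef := by
    intro t
    have h1 := key t
    have h2 := (hLyap t).conjTranspose_mul_mul_same (1 : Matrix (Fin n) (Fin n) ℝ)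
    -- P - γ • ∑ is PSD : add GᵀPG and γ•1 back
    have hPG : ((G t)ᵀ * P * G t).PosSemidef := by
      have := hP.posSemidef.conjTranspose_mul_mul_same (G t)
      simpa using this
    have hI : (γ • (1 : Matrix (Fin n) (Fin n) ℝ)).PosSemidef :=
      psd_smul Matrix.PosSemidef.one hγ.le
    have hsum : (P - γ • (∑ s ∈ Finset.range t, (G s)ᵀ * G s)).PosSemidef := by
      have heq : P - γ • (∑ s ∈ Finset.range t, (G s)ᵀ * G s)
          = (P - (G t)ᵀ * P * G t
              - γ • ((1 : Matrix (Fin n) (Fin n) ℝ) + ∑ s ∈ Finset.range t, (G s)ᵀ * G s))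
            + ((G t)ᵀ * P * G t + γ • (1 : Matrix (Fin n) (Fin n) ℝ)) := by
        simp only [smul_add]; abel
      rw [heq]
      exact (key t).add (hPG.add hI)
    have heq2 : γ⁻¹ • P - ∑ s ∈ Finset.range t, (G s)ᵀ * G s
        = γ⁻¹ • (P - γ • (∑ s ∈ Finset.range t, (G s)ᵀ * G s)) := by
      rw [smul_sub, smul_smul, inv_mul_cancel₀ hγ.ne', one_smul]
    rw [heq2]
    exact psd_smul hsum (inv_nonneg.mpr hγ.le)
  -- trace bound and summability
  set a : ℕ → ℝ := fun t => ∑ i, ∑ j, (G t j i) ^ 2 with ha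
  have htrace : ∀ t, Matrix.trace ((G t)ᵀ * G t) = a t := by
    intro t
    simp [Matrix.trace, Matrix.diag, Matrix.mul_apply, ha, sq]
  have ha_nonneg : ∀ t, 0 ≤ a t := fun t =>
    Finset.sum_nonneg fun i _ => Finset.sum_nonneg fun j _ => sq_nonneg _
  have hdiag_nonneg : ∀ (M : Matrix (Fin n) (Fin n) ℝ), M.PosSemidef → 0 ≤ M.trace := by
    intro M hM
    refine Finset.sum_nonneg fun i _ => ?_
    have := hM.dotProduct_mulVec_nonneg (Pi.single i 1)
    simpa [dotProduct, Matrix.mulVec, Pi.single_apply] using this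
  have hbound : ∀ t, ∑ s ∈ Finset.range t, a s ≤ Matrix.trace (γ⁻¹ • P) := by
    intro t
    have h := hdiag_nonneg _ (bound t)
    have : Matrix.trace (γ⁻¹ • P - ∑ s ∈ Finset.range t, (G s)ᵀ * G s)
        = Matrix.trace (γ⁻¹ • P) - ∑ s ∈ Finset.range t, a s := by
      rw [Matrix.trace_sub, Matrix.trace_sum]
      simp only [htrace]
    linarith [this ▸ h]
  have hsummable : Summable a :=
    summable_of_sum_range_le ha_nonneg hbound
  have ha_tendsto : Filter.Tendsto a Filter.atTop (nhds 0) := hsummable.tendsto_atTop_zero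
  -- entrywise convergence of G to 0
  have hGtend : Filter.Tendsto G Filter.atTop (nhds 0) := by
    refine tendsto_pi_nhds.mpr ?_
    intro i
    rw [tendsto_pi_nhds]
    intro j
    have hsq : ∀ t, (G t i j) ^ 2 ≤ a t := by
      intro t
      have : (G t i j) ^ 2 ≤ ∑ i', (G t i' j) ^ 2 :=
        Finset.single_le_sum (f := fun i' => (G t i' j) ^ 2)
          (fun i' _ => sq_nonneg _) (Finset.mem_univ i)
      refine this.trans ?_
      exact Finset.single_le_sum (f := fun j' => ∑ i', (G t i' j') ^ 2)
        (fun j' _ => Finset.sum_nonneg fun _ _ => sq_nonneg _) (Finset.mem_univ j)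
    have habs : ∀ t, |G t i j| ≤ Real.sqrt (a t) := by
      intro t
      rw [← Real.sqrt_sq_eq_abs]
      exact Real.sqrt_le_sqrt (hsq t)
    have hsqrt : Filter.Tendsto (fun t => Real.sqrt (a t)) Filter.atTop (nhds 0) := by
      have := (Real.continuous_sqrt.tendsto 0).comp ha_tendsto
      simpa [Function.comp_def] using this
    have := squeeze_zero (fun t => abs_nonneg _) habs hsqrt
    have h0 : Filter.Tendsto (fun t => G t i j) Filter.atTop (nhds 0) :=
      (tendsto_zero_iff_abs_tendsto_zero _).mpr this
    simpa using h0
  refine ⟨fun t _ => key t, bound, ?_, ?_⟩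
  · have : Continuous fun M : Matrix (Fin n) (Fin n) ℝ => Mᵀ * M :=
      (continuous_id.matrix_transpose).matrix_mul continuous_id
    have := (this.tendsto 0).comp hGtend
    simpa [Function.comp_def] using this
  · intro x₀
    have : Continuous fun M : Matrix (Fin n) (Fin n) ℝ => M *ᵥ x₀ :=
      continuous_id.matrix_mulVec continuous_const
    have := (this.tendsto 0).comp hGtend
    simpa [Function.comp_def] using this
end

section
/- Let N be a positive integer and for k = 1,…,N let P_k be symmetric positive definite ñ×ñ matrices, F_k ∈ ℝ^{ñ×ñ}, G ∈ ℝ^{ñ×ñ}, and β ∈ (0,1), such that the 2ñ×2ñ block matrices [[β² P_k, F_kᵀ G], [Gᵀ F_k, Gᵀ + G − P_k]] are positive semidefinite for all k. Then for any convex-combination weights w ∈ ℝ^N (w_k ≥ 0, ∑ w_k = 1), writing P(w) := ∑_k w_k P_k and F(w) := ∑_k w_k F_k, one has β² P(w) ⪰ F(w)ᵀ P(w) F(w). -/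
open Matrix

private lemma psd_smul_aux {n : Type*} [Fintype n] {A : Matrix n n ℝ} (hA : A.PosSemidef)
    {c : ℝ} (hc : 0 ≤ c) : (c • A).PosSemidef := by
  refine .of_dotProduct_mulVec_nonneg ?_ fun x => ?_
  · unfold Matrix.IsHermitian
    rw [conjTranspose_smul, hA.1.eq]
    simp
  · rw [smul_mulVec, dotProduct_smul, smul_eq_mul]
    exact mul_nonneg hc (hA.dotProduct_mulVec_nonneg x)

private lemma psd_sum_aux {n ι : Type*} [Fintype n] [Fintype ι]
    {A : ι → Matrix n n ℝ} (h : ∀ i, (A i).PosSemidef) :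
    (∑ i, A i).PosSemidef :=
  Finset.sum_induction _ _ (fun _ _ ha hb => ha.add hb) .zero (fun i _ => h i)

private lemma sum_fromBlocks {ι α n m : Type*} [AddCommMonoid α] (s : Finset ι)
    (A : ι → Matrix n n α) (B : ι → Matrix n m α) (C : ι → Matrix m n α) (D : ι → Matrix m m α) :
    ∑ k ∈ s, fromBlocks (A k) (B k) (C k) (D k)
      = fromBlocks (∑ k ∈ s, A k) (∑ k ∈ s, B k) (∑ k ∈ s, C k) (∑ k ∈ s, D k) := by
  classical
  induction s using Finset.induction_on with
  | empty => simp [← fromBlocks_zero]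
  | insert _ _ ha ih => rw [Finset.sum_insert ha, Finset.sum_insert ha, Finset.sum_insert ha,
      Finset.sum_insert ha, Finset.sum_insert ha, ih, ← fromBlocks_add]

/-- de Oliveira–Bernussou–Geromel: if the block matrices
`[[β² P_k, F_kᵀ G], [Gᵀ F_k, Gᵀ + G − P_k]]` are PSD for all `k` with `P_k ≻ 0`
symmetric and `β ∈ (0,1)`, then for any simplex weights `w`, writing
`P(w) = ∑ w_k P_k` and `F(w) = ∑ w_k F_k`, one has `β² P(w) ⪰ F(w)ᵀ P(w) F(w)`. -/
theorem stmt13 {d N : ℕ} (P F : Fin N → Matrix (Fin d) (Fin d) ℝ)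
    (G : Matrix (Fin d) (Fin d) ℝ) (β : ℝ) (hβ : β ∈ Set.Ioo (0 : ℝ) 1)
    (hP : ∀ k, (P k).PosDef)
    (hLMI : ∀ k, (Matrix.fromBlocks (β ^ 2 • P k) ((F k)ᵀ * G)
      (Gᵀ * F k) (Gᵀ + G - P k)).PosSemidef)
    (w : Fin N → ℝ) (hw0 : ∀ k, 0 ≤ w k) (hw1 : ∑ k, w k = 1) :
    (β ^ 2 • (∑ k, w k • P k)
      - (∑ k, w k • F k)ᵀ * (∑ k, w k • P k) * (∑ k, w k • F k)).PosSemidef := by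
  classical
  have e1 : (∑ k, w k • (β ^ 2 • P k)) = β ^ 2 • ∑ k, w k • P k := by
    rw [Finset.smul_sum]
    exact Finset.sum_congr rfl fun k _ => smul_comm _ _ _
  have e2 : (∑ k, w k • ((F k)ᵀ * G)) = (∑ k, w k • F k)ᵀ * G := by
    rw [transpose_sum, Finset.sum_mul]
    exact Finset.sum_congr rfl fun k _ => by rw [transpose_smul, smul_mul_assoc]
  have e3 : (∑ k, w k • (Gᵀ * F k)) = Gᵀ * ∑ k, w k • F k := by
    rw [Finset.mul_sum]
    exact Finset.sum_congr rfl fun k _ => (mul_smul_comm _ _ _).symm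
  have e4 : (∑ k, w k • (Gᵀ + G - P k)) = Gᵀ + G - ∑ k, w k • P k := by
    simp_rw [smul_sub, Finset.sum_sub_distrib, ← Finset.sum_smul, hw1, one_smul]
  have heq : fromBlocks (β ^ 2 • ∑ k, w k • P k) ((∑ k, w k • F k)ᵀ * G)
      (Gᵀ * ∑ k, w k • F k) (Gᵀ + G - ∑ k, w k • P k)
      = ∑ k, w k • fromBlocks (β ^ 2 • P k) ((F k)ᵀ * G) (Gᵀ * F k) (Gᵀ + G - P k) := by
    simp_rw [fromBlocks_smul]
    rw [sum_fromBlocks, e1, e2, e3, e4]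
  have hBlk : (fromBlocks (β ^ 2 • ∑ k, w k • P k) ((∑ k, w k • F k)ᵀ * G)
      (Gᵀ * ∑ k, w k • F k) (Gᵀ + G - ∑ k, w k • P k)).PosSemidef := by
    rw [heq]
    exact psd_sum_aux fun k => psd_smul_aux (hLMI k) (hw0 k)
  set Pw := ∑ k, w k • P k
  set Fw := ∑ k, w k • F k
  have hconj := hBlk.conjTranspose_mul_mul_same (fromRows (1 : Matrix (Fin d) (Fin d) ℝ) (-Fw))
  rw [conjTranspose_fromRows_eq_fromCols_conjTranspose] at hconj
  have hK : fromCols (1 : Matrix (Fin d) (Fin d) ℝ)ᴴ (-Fw)ᴴ *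
      (fromBlocks (β ^ 2 • Pw) (Fwᵀ * G) (Gᵀ * Fw) (Gᵀ + G - Pw)) * fromRows (1 : Matrix (Fin d) (Fin d) ℝ) (-Fw)
      = β ^ 2 • Pw - Fwᵀ * Pw * Fw := by
    have h1 : (1 : Matrix (Fin d) (Fin d) ℝ)ᴴ = 1 := by simp
    have h2 : (-Fw)ᴴ = -Fwᵀ := by
      rw [conjTranspose_neg, conjTranspose_eq_transpose_of_trivial]
    rw [h1, h2, Matrix.mul_assoc (fromCols 1 (-Fwᵀ)) _ _, fromBlocks_mul_fromRows,
      fromCols_mul_fromRows]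
    simp only [mul_one, one_mul, mul_neg, neg_mul, mul_add, mul_sub, sub_mul, add_mul, neg_neg,
      mul_assoc, neg_add, neg_sub]
    abel
  rw [hK] at hconj
  exact hconj
end

section
/- For any invertible real n×n matrix H, the elimination–duplication compressed Kronecker square satisfies (L (H ⊗ H) D)⁻¹ = L (H⁻¹ ⊗ H⁻¹) D, where L is the elimination matrix (vech = L · vec on arbitrary n×n matrices) and D is the duplication matrix (vec = D · vech on symmetric matrices). -/
open Matrix Kronecker

/-- For invertible `H`, `(L (H ⊗ H) D)⁻¹ = L (H⁻¹ ⊗ H⁻¹) D`, where `L` is the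
elimination matrix (`L · vec X = vech X` for all `X`) and `D` the duplication matrix
(`D · vech S = vec S` for symmetric `S`).  Here `vec X` is indexed by pairs
`(column, row)` with `vec X (j, i) = X i j`, and `vech` is indexed by lower-triangular
positions `(row, col)` with `col ≤ row`. -/
theorem stmt15 {n : ℕ}
    (L : Matrix {p : Fin n × Fin n // p.2 ≤ p.1} (Fin n × Fin n) ℝ)
    (D : Matrix (Fin n × Fin n) {p : Fin n × Fin n // p.2 ≤ p.1} ℝ)
    (hL : ∀ X : Matrix (Fin n) (Fin n) ℝ,
      (L *ᵥ fun q : Fin n × Fin n => X q.2 q.1)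
        = fun p : {p : Fin n × Fin n // p.2 ≤ p.1} => X p.1.1 p.1.2)
    (hD : ∀ S : Matrix (Fin n) (Fin n) ℝ, S.IsSymm →
      (D *ᵥ fun p : {p : Fin n × Fin n // p.2 ≤ p.1} => S p.1.1 p.1.2)
        = fun q : Fin n × Fin n => S q.2 q.1)
    (H : Matrix (Fin n) (Fin n) ℝ) (hH : IsUnit H.det) :
    (L * (H ⊗ₖ H) * D)⁻¹ = L * (H⁻¹ ⊗ₖ H⁻¹) * D := by
  classical
  -- key: (K ⊗ K) * vec X = vec (K X Kᵀ)
  have key : ∀ K X : Matrix (Fin n) (Fin n) ℝ,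
      ((K ⊗ₖ K) *ᵥ fun q : Fin n × Fin n => X q.2 q.1)
        = fun q : Fin n × Fin n => (K * X * Kᵀ) q.2 q.1 := by
    intro K X
    funext q
    obtain ⟨j, i⟩ := q
    simp only [Matrix.mulVec, dotProduct, Fintype.sum_prod_type,
      Matrix.kroneckerMap_apply, Matrix.mul_apply, Matrix.transpose_apply,
      Finset.sum_mul, Finset.mul_sum]
    exact Finset.sum_congr rfl fun l _ => Finset.sum_congr rfl fun k _ => by ring
  -- every vector on lower-triangular indices is the vech of a symmetric matrix
  have sym : ∀ x : {p : Fin n × Fin n // p.2 ≤ p.1} → ℝ,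
      ∃ S : Matrix (Fin n) (Fin n) ℝ, S.IsSymm ∧
        (fun p : {p : Fin n × Fin n // p.2 ≤ p.1} => S p.1.1 p.1.2) = x := by
    intro x
    refine ⟨fun i j => if h : j ≤ i then x ⟨(i, j), h⟩ else x ⟨(j, i), le_of_not_ge h⟩,
      ?_, ?_⟩
    · ext i j
      change (if h : i ≤ j then x ⟨(j, i), h⟩ else x ⟨(i, j), le_of_not_ge h⟩) =
        (if h : j ≤ i then x ⟨(i, j), h⟩ else x ⟨(j, i), le_of_not_ge h⟩)
      by_cases h1 : i ≤ j <;> by_cases h2 : j ≤ i <;> simp [h1, h2]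
      · have : i = j := le_antisymm h1 h2
        subst this; rfl
      · exact absurd (le_total i j) (by simp [h1, h2])
    · funext p
      obtain ⟨⟨i, j⟩, hp⟩ := p
      simp [hp]
  have mulcalc : ∀ A B : Matrix (Fin n) (Fin n) ℝ, A * B = 1 → B * A = 1 →
      (L * (A ⊗ₖ A) * D) * (L * (B ⊗ₖ B) * D) = 1 := by
    intro A B hAB hBA
    have hvec : ∀ x, ((L * (A ⊗ₖ A) * D) * (L * (B ⊗ₖ B) * D)) *ᵥ x = x := by
      intro x
      obtain ⟨S, hS, hSx⟩ := sym x
      rw [← hSx]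
      simp only [← Matrix.mulVec_mulVec]
      rw [hD S hS, key B S, hL (B * S * Bᵀ)]
      have hsymm : (B * S * Bᵀ).IsSymm := by
        unfold Matrix.IsSymm at hS ⊢
        rw [Matrix.transpose_mul, Matrix.transpose_mul, Matrix.transpose_transpose, hS,
          Matrix.mul_assoc]
      rw [hD _ hsymm, key A (B * S * Bᵀ)]
      have : A * (B * S * Bᵀ) * Aᵀ = S := by
        rw [← Matrix.mul_assoc, ← Matrix.mul_assoc, hAB, Matrix.one_mul, Matrix.mul_assoc,
          ← Matrix.transpose_mul, hAB, Matrix.transpose_one, Matrix.mul_one]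
      rw [this, hL S]
    ext i j
    have := congrFun (hvec (Pi.single j 1)) i
    simp only [Matrix.mulVec_single_one, Matrix.col_apply, mul_one, Pi.single_apply] at this
    rw [Matrix.one_apply]
    exact this
  have h1 : H * H⁻¹ = 1 := Matrix.mul_nonsing_inv H hH
  have h2 : H⁻¹ * H = 1 := Matrix.nonsing_inv_mul H hH
  exact Matrix.inv_eq_right_inv (mulcalc H H⁻¹ h1 h2)
end

section
/- For any real n×n matrix H, the identity D L (H ⊗ H) D = (H ⊗ H) D holds, where L is the elimination matrix and D the duplication matrix; in particular, for symmetric S, L (H ⊗ H) D vech(S) = vech(H S Hᵀ). -/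
open Matrix Kronecker

/-- Key vec identity: `(H ⊗ H) vec X = vec (H X Hᵀ)` with column-stacking vec. -/
lemma kron_vec_aux {n : ℕ} (H X : Matrix (Fin n) (Fin n) ℝ) :
    ((H ⊗ₖ H) *ᵥ fun q : Fin n × Fin n => X q.2 q.1)
      = fun q : Fin n × Fin n => (H * X * Hᵀ) q.2 q.1 := by
  funext q
  simp only [Matrix.mulVec, dotProduct, Matrix.kroneckerMap_apply,
    Matrix.mul_apply, Matrix.transpose_apply, Fintype.sum_prod_type,
    Finset.sum_mul, Finset.mul_sum]
  refine Finset.sum_congr rfl fun b _ => Finset.sum_congr rfl fun a _ => ?_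
  ring

/-- Magnus–Neudecker identity `D L (H ⊗ H) D = (H ⊗ H) D` for the elimination matrix
`L` and duplication matrix `D`; in particular, for symmetric `S`,
`L (H ⊗ H) D · vech S = vech (H S Hᵀ)`. -/
theorem stmt16 {n : ℕ}
    (L : Matrix {p : Fin n × Fin n // p.2 ≤ p.1} (Fin n × Fin n) ℝ)
    (D : Matrix (Fin n × Fin n) {p : Fin n × Fin n // p.2 ≤ p.1} ℝ)
    (hL : ∀ X : Matrix (Fin n) (Fin n) ℝ,
      (L *ᵥ fun q : Fin n × Fin n => X q.2 q.1)
        = fun p : {p : Fin n × Fin n // p.2 ≤ p.1} => X p.1.1 p.1.2)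
    (hD : ∀ S : Matrix (Fin n) (Fin n) ℝ, S.IsSymm →
      (D *ᵥ fun p : {p : Fin n × Fin n // p.2 ≤ p.1} => S p.1.1 p.1.2)
        = fun q : Fin n × Fin n => S q.2 q.1)
    (H : Matrix (Fin n) (Fin n) ℝ) :
    D * L * (H ⊗ₖ H) * D = (H ⊗ₖ H) * D ∧
    ∀ S : Matrix (Fin n) (Fin n) ℝ, S.IsSymm →
      ((L * (H ⊗ₖ H) * D) *ᵥ fun p : {p : Fin n × Fin n // p.2 ≤ p.1} => S p.1.1 p.1.2)
        = fun p : {p : Fin n × Fin n // p.2 ≤ p.1} => (H * S * Hᵀ) p.1.1 p.1.2 := by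
  -- second part as a lemma, used also for the first part
  have key : ∀ S : Matrix (Fin n) (Fin n) ℝ, S.IsSymm →
      ((L * (H ⊗ₖ H) * D) *ᵥ fun p : {p : Fin n × Fin n // p.2 ≤ p.1} => S p.1.1 p.1.2)
        = fun p : {p : Fin n × Fin n // p.2 ≤ p.1} => (H * S * Hᵀ) p.1.1 p.1.2 := by
    intro S hS
    rw [← Matrix.mulVec_mulVec, ← Matrix.mulVec_mulVec, hD S hS, kron_vec_aux, hL]
  constructor
  · -- prove matrix equality entrywise via action on basis vectors
    ext q p
    have hbasis : ∀ M : Matrix (Fin n × Fin n) {p : Fin n × Fin n // p.2 ≤ p.1} ℝ,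
        M q p = (M *ᵥ Pi.single p 1) q := by
      intro M
      simp [Matrix.mulVec_single]
    rw [hbasis (D * L * (H ⊗ₖ H) * D), hbasis ((H ⊗ₖ H) * D)]
    -- the symmetric "indicator" matrix whose vech is the basis vector at p
    set Sp : Matrix (Fin n) (Fin n) ℝ :=
      fun i j => if (i, j) = p.1 ∨ (j, i) = p.1 then 1 else 0 with hSp
    have hSpSymm : Sp.IsSymm := by
      ext i j
      rw [Matrix.transpose_apply]; simp only [hSp]
      by_cases h : (j, i) = p.1 ∨ (i, j) = p.1
      · rw [if_pos h, if_pos (Or.symm h)]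
      · rw [if_neg h, if_neg fun h' => h (Or.symm h')]
    have hvech : (fun r : {p : Fin n × Fin n // p.2 ≤ p.1} => Sp r.1.1 r.1.2)
        = Pi.single p 1 := by
      funext r
      by_cases h : r = p
      · subst h
        simp [hSp]
      · have : ¬((r.1.1, r.1.2) = p.1 ∨ (r.1.2, r.1.1) = p.1) := by
          rintro (h1 | h2)
          · exact h (Subtype.ext (by simpa using h1))
          · apply h
            have h2a : r.1.2 = p.1.1 := congrArg Prod.fst h2
            have h2b : r.1.1 = p.1.2 := congrArg Prod.snd h2
            have hle1 : r.1.2 ≤ r.1.1 := r.2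
            have hle2 : p.1.2 ≤ p.1.1 := p.2
            have : r.1.1 = r.1.2 := le_antisymm (h2b ▸ h2a ▸ hle2) hle1
            have hpe : (p : Fin n × Fin n).2 = (p : Fin n × Fin n).1 := by
              rw [← h2b, this, h2a]
            exact Subtype.ext (Prod.ext (h2b.trans hpe) (h2a.trans hpe.symm))
        simp [hSp, this, Pi.single_eq_of_ne h]
    have hHSp : (H * Sp * Hᵀ).IsSymm := by
      unfold Matrix.IsSymm
      rw [Matrix.transpose_mul, Matrix.transpose_mul, Matrix.transpose_transpose,
        hSpSymm.eq, Matrix.mul_assoc]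
    -- now compute both sides
    rw [← hvech]
    rw [show D * L * (H ⊗ₖ H) * D = D * (L * (H ⊗ₖ H) * D) by rw [Matrix.mul_assoc D L, Matrix.mul_assoc D]]
    rw [← Matrix.mulVec_mulVec, key Sp hSpSymm, hD _ hHSp,
      ← Matrix.mulVec_mulVec, hD Sp hSpSymm, kron_vec_aux]
  · exact key
end
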